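/- For a finite multiset of vectors S in a Hilbert space V with POD modes φ_1,...,φ_{|S|} and singular values σ_1 ≥ ... ≥ σ_{|S|}, the span V_N of the first N POD modes satisfies ∑_{s∈S} ‖s − P_{V_N}(s)‖² = ∑_{m=N+1}^{|S|} σ_m², where P_{V_N} is the orthogonal projection onto V_N. -/

import Mathlib

open Finset

/-- POD error identity: the squared ℓ²-error of projecting the snapshots onto the
span of the first `N` POD modes equals the sum of the squared singular values with index ≥ N. -/
theorem pod_projection_error
    {V : Type*} [NormedAddCommGroup V] [InnerProductSpace ℝ V] [FiniteDimensional ℝ V]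
    {k : ℕ} (N : ℕ) (hN : N ≤ k)
    (s : Fin k → V) (σ : Fin k → ℝ) (φ : Fin k → V)
    (lam : Fin k → EuclideanSpace ℝ (Fin k))
    (hσa : Antitone σ) (hσ0 : ∀ j, 0 ≤ σ j)
    (hφ : Orthonormal ℝ φ) (hlam : Orthonormal ℝ lam)
    (hs : ∀ m, s m = ∑ j, (σ j * lam j m) • φ j) :
    ∑ m, ‖s m - (Submodule.orthogonalProjectionOnto
        (Submodule.span ℝ (Set.range fun n : Fin N => φ (Fin.castLE hN n))) (s m) : V)‖ ^ 2
      = ∑ j ∈ univ.filter fun j : Fin k => N ≤ (j : ℕ), σ j ^ 2 := by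
  classical
  set K := Submodule.span ℝ (Set.range fun n : Fin N => φ (Fin.castLE hN n)) with hK
  set t : Finset (Fin k) := univ.filter fun j : Fin k => N ≤ (j : ℕ) with ht
  set tc : Finset (Fin k) := univ.filter fun j : Fin k => (j : ℕ) < N with htc
  have hzmem : ∀ m, (∑ j ∈ t, (σ j * lam j m) • φ j) ∈ Kᗮ := by
    intro m
    rw [Submodule.mem_orthogonal]
    intro u hu
    induction hu using Submodule.span_induction with
    | mem x hx =>
      obtain ⟨n, rfl⟩ := hx
      rw [inner_sum]
      refine Finset.sum_eq_zero fun j hj => ?_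
      have hjN : N ≤ (j : ℕ) := by simpa [ht] using hj
      rw [real_inner_smul_right, hφ.2, mul_zero]
      intro h
      have : ((Fin.castLE hN n : Fin k) : ℕ) = (j : ℕ) := by rw [h]
      simp only [Fin.coe_castLE] at this
      omega
    | zero => simp
    | add x y _ _ hx hy => rw [inner_add_left, hx, hy, add_zero]
    | smul c x _ hx => rw [inner_smul_left, hx, mul_zero]
  have hproj : ∀ m, s m - (Submodule.orthogonalProjectionOnto K (s m) : V)
      = ∑ j ∈ t, (σ j * lam j m) • φ j := by
    intro m
    have hv : (∑ j ∈ tc, (σ j * lam j m) • φ j) ∈ K := by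
      refine Submodule.sum_mem _ fun j hj => Submodule.smul_mem _ _ ?_
      apply Submodule.subset_span
      have hjN : (j : ℕ) < N := by simpa [htc] using hj
      exact ⟨⟨(j : ℕ), hjN⟩, congrArg φ (Fin.ext (by simp))⟩
    have hsplit : s m = (∑ j ∈ tc, (σ j * lam j m) • φ j)
        + ∑ j ∈ t, (σ j * lam j m) • φ j := by
      rw [hs m, ht, htc, ← Finset.sum_filter_add_sum_filter_not univ
        (fun j : Fin k => (j : ℕ) < N)]
      congr 1
      apply Finset.sum_congr _ fun _ _ => rfl
      ext j
      simp [Nat.not_lt]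
    have := Submodule.eq_starProjection_of_mem_orthogonal' hv (hzmem m) hsplit
    rw [Submodule.coe_orthogonalProjectionOnto_apply, this, hsplit]
    abel
  have hnorm : ∀ m, ‖s m - (Submodule.orthogonalProjectionOnto K (s m) : V)‖ ^ 2
      = ∑ j ∈ t, (σ j * lam j m) ^ 2 := by
    intro m
    rw [hproj m, ← real_inner_self_eq_norm_sq, hφ.inner_sum]
    exact Finset.sum_congr rfl fun j _ => by simp [sq]
  calc ∑ m, ‖s m - (Submodule.orthogonalProjectionOnto K (s m) : V)‖ ^ 2
      = ∑ m, ∑ j ∈ t, (σ j * lam j m) ^ 2 := by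
        exact Finset.sum_congr rfl fun m _ => hnorm m
    _ = ∑ j ∈ t, ∑ m, (σ j * lam j m) ^ 2 := Finset.sum_comm
    _ = ∑ j ∈ t, σ j ^ 2 := by
        refine Finset.sum_congr rfl fun j _ => ?_
        have h1 : (1 : ℝ) = ∑ m, lam j m * lam j m := by
          have := real_inner_self_eq_norm_sq (lam j)
          rw [hlam.1 j] at this
          rw [one_pow] at this
          rw [← this, PiLp.inner_apply]
          simp [sq]
        calc ∑ m, (σ j * lam j m) ^ 2 = σ j ^ 2 * ∑ m, lam j m * lam j m := by
              rw [Finset.mul_sum]; exact Finset.sum_congr rfl fun m _ => by ring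
          _ = σ j ^ 2 := by rw [← h1, mul_one]
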